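/- arXiv:2510.05418 — 3 statements merged into one kernel-verified Lean document; each statement's English description precedes it below -/
import Mathlib

section
/- Let O be a complete DVR with uniformizer ϖ and let n ≥ 1. Consider A = {(a, b) ∈ O × O : a ≡ b mod ϖⁿ}. Then A is isomorphic as an O-algebra to O[[x]]/(x(x − ϖⁿ)). -/
/-!
STATEMENT 6: For a complete DVR `O` with uniformizer `ϖ` and `n ≥ 1`, the `O`-algebra
`A = {(a, b) ∈ O × O : a ≡ b mod ϖⁿ}` is isomorphic to `O⟦x⟧/(x(x − ϖⁿ))`.
-/

open PowerSeries in
private lemma tail_limits (O : Type) [CommRing O]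
    (I : Ideal O) [IsAdicComplete I O] (π : O) (hπ : π ∈ I) (f : ℕ → O) :
    ∃ T : ℕ → O, ∀ m, T m = f m + π * T (m + 1) := by
  set S : ℕ → ℕ → O := fun m k => ∑ j ∈ Finset.range k, f (m + j) * π ^ j with hS
  have hpow : ∀ j k : ℕ, k ≤ j → π ^ j ∈ I ^ k := fun j k hk =>
    Ideal.pow_le_pow_right hk (Ideal.pow_mem_pow hπ j)
  have cauchy : ∀ m : ℕ, ∀ {k l : ℕ}, k ≤ l →
      S m k ≡ S m l [SMOD (I ^ k • ⊤ : Submodule O O)] := by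
    intro m k l hkl
    rw [SModEq.sub_mem]
    have : S m k - S m l = -(∑ j ∈ Finset.Ico k l, f (m + j) * π ^ j) := by
      rw [hS]; simp only [← Finset.sum_range_add_sum_Ico _ hkl]; ring
    rw [this]
    refine neg_mem ?_
    have : (∑ j ∈ Finset.Ico k l, f (m + j) * π ^ j) ∈ I ^ k :=
      Ideal.sum_mem _ fun j hj =>
        Ideal.mul_mem_left _ _ (hpow j k (Finset.mem_Ico.mp hj).1)
    simpa using this
  have hT : ∀ m : ℕ, ∃ L : O, ∀ k, S m k ≡ L [SMOD (I ^ k • ⊤ : Submodule O O)] :=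
    fun m => IsPrecomplete.prec (IsAdicComplete.toIsPrecomplete) (cauchy m)
  choose T hT using hT
  refine ⟨T, fun m => ?_⟩
  have key : ∀ k : ℕ, T m - (f m + π * T (m + 1)) ∈ (I ^ k : Ideal O) := by
    intro k
    have h1 : S m (k+1) - T m ∈ (I ^ (k+1) : Ideal O) := by
      have := (SModEq.sub_mem).mp (hT m (k+1)); simpa using this
    have h2 : S (m+1) k - T (m+1) ∈ (I ^ k : Ideal O) := by
      have := (SModEq.sub_mem).mp (hT (m+1) k); simpa using this
    have hshift : S m (k+1) = f m + π * S (m+1) k := by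
      show (∑ j ∈ Finset.range (k+1), f (m + j) * π ^ j) =
        f m + π * ∑ j ∈ Finset.range k, f (m + 1 + j) * π ^ j
      rw [Finset.sum_range_succ']
      simp only [pow_succ, Finset.mul_sum]
      rw [add_comm]
      congr 1
      · simp
      · refine Finset.sum_congr rfl fun j _ => ?_
        rw [show m + (j + 1) = m + 1 + j by ring]
        ring
    have : T m - (f m + π * T (m + 1)) =
        -(S m (k+1) - T m) + π * (S (m+1) k - T (m+1)) := by
      rw [hshift]; ring
    rw [this]
    exact add_mem (neg_mem (Ideal.pow_le_pow_right (Nat.le_succ k) h1))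
      (Ideal.mul_mem_left _ _ h2)
  have := IsAdicComplete.toIsHausdorff (I := I) (M := O)
  have h0 : T m - (f m + π * T (m + 1)) = 0 := by
    refine this.haus _ fun k => ?_
    rw [SModEq.zero]
    simpa using key k
  exact sub_eq_zero.mp h0

open PowerSeries in
private lemma exists_rep (O : Type) [CommRing O]
    (I : Ideal O) [IsAdicComplete I O] (π : O) (hπ : π ∈ I) (f : PowerSeries O) :
    ∃ a c : O, ∃ g : PowerSeries O,
      f = C a + C c * X + X * (X - C π) * g := by
  obtain ⟨T, hT⟩ := tail_limits O I π hπ (fun m => coeff m f)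
  refine ⟨coeff 0 f, T 1, mk (fun m => T (m + 2)), ?_⟩
  have hX2 : X * (X - C π) * (mk (fun m => T (m + 2)) : O⟦X⟧) =
      X * (X * mk (fun m => T (m + 2))) - C π * (X * mk (fun m => T (m + 2))) := by
    ring
  ext k
  rcases k with _ | _ | k
  · simp [hX2]
  · simp only [hX2, map_add, map_sub, coeff_succ_X_mul, coeff_zero_X_mul, coeff_C_mul,
      coeff_one_X, coeff_C, coeff_mk, mul_one]
    rw [hT 1]
    simp
  · simp only [hX2, map_add, map_sub, coeff_succ_X_mul, coeff_C_mul, coeff_mk, coeff_C,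
      coeff_X]
    rw [hT (k+2)]
    norm_num

open PowerSeries in
private lemma rep_unique (O : Type) [CommRing O]
    (I : Ideal O) [IsAdicComplete I O] (π : O) (hπ : π ∈ I) (a c : O)
    (h : C a + C c * X ∈ Ideal.span {X * (X - C π)}) : a = 0 ∧ c = 0 := by
  rw [Ideal.mem_span_singleton] at h
  obtain ⟨g, hg⟩ := h
  have hX2 : X * (X - C π) * g =
      X * (X * g) - C π * (X * g) := by ring
  rw [hX2] at hg
  have ha : a = 0 := by
    have := congrArg (coeff 0) hg
    simpa using this
  have hrec : ∀ k : ℕ, coeff k g = π * coeff (k+1) g := by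
    intro k
    have := congrArg (coeff (k+2)) hg
    rw [show k + 2 = (k+1) + 1 by ring] at this
    simp only [map_add, map_sub, coeff_succ_X_mul, coeff_C_mul, coeff_C, coeff_X,
      if_neg (show ¬((k:ℕ)+1+1 = 0) by omega), if_neg (show ¬((k:ℕ)+1+1 = 1) by omega),
      mul_zero, add_zero, zero_add] at this
    linear_combination -this
  have hdiv : ∀ k : ℕ, coeff 0 g = π ^ k * coeff k g := by
    intro k
    induction k with
    | zero => simp
    | succ k ih => rw [ih, hrec k, pow_succ]; ring
  have h0 : coeff 0 g = 0 := by
    refine (IsAdicComplete.toIsHausdorff (I := I) (M := O)).haus _ fun k => ?_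
    rw [SModEq.zero]
    have : coeff 0 g ∈ (I ^ k : Ideal O) := by
      rw [hdiv k]
      exact Ideal.mul_mem_right _ _ (Ideal.pow_mem_pow hπ k)
    simpa using this
  have hc : c = 0 := by
    have := congrArg (coeff 1) hg
    simp only [map_add, map_sub, coeff_succ_X_mul, coeff_zero_X_mul, coeff_C_mul,
      coeff_one_X, coeff_C, mul_one, h0] at this
    simpa [ha] using this
  exact ⟨ha, hc⟩

open PowerSeries in
theorem congruence_pair_algebra_iso
    (O : Type) [CommRing O] [IsDomain O] [IsDiscreteValuationRing O]
    [IsAdicComplete (IsLocalRing.maximalIdeal O) O]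
    (ϖ : O) (hϖ : Irreducible ϖ) (n : ℕ) (hn : 1 ≤ n)
    -- `A` is the subalgebra of `O × O` of pairs congruent modulo `ϖⁿ`
    (A : Subalgebra O (O × O))
    (hA : A = AlgHom.equalizer
      ((Ideal.Quotient.mkₐ O (Ideal.span {ϖ ^ n})).comp (AlgHom.fst O O O))
      ((Ideal.Quotient.mkₐ O (Ideal.span {ϖ ^ n})).comp (AlgHom.snd O O O))) :
    Nonempty (A ≃ₐ[O]
      (PowerSeries O ⧸ Ideal.span
        {PowerSeries.X * (PowerSeries.X - PowerSeries.C (ϖ ^ n))})) := by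
  set π : O := ϖ ^ n with hπdef
  set J : Ideal (PowerSeries O) := Ideal.span {X * (X - C π)} with hJ
  have hπI : π ∈ IsLocalRing.maximalIdeal O := by
    have hϖm : ϖ ∈ IsLocalRing.maximalIdeal O := hϖ.not_isUnit
    have hpow : π = ϖ ^ (n-1) * ϖ := by rw [hπdef, ← pow_succ]; congr 1; omega
    rw [hpow]
    exact Ideal.mul_mem_left _ _ hϖm
  have hπ0 : π ≠ 0 := pow_ne_zero n hϖ.ne_zero
  -- membership characterization
  have hmem : ∀ x : O × O, x ∈ A ↔ π ∣ x.2 - x.1 := by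
    intro x
    rw [hA]
    constructor
    · intro hx
      have : Ideal.Quotient.mk (Ideal.span {π}) x.1 = Ideal.Quotient.mk (Ideal.span {π}) x.2 := hx
      rw [Ideal.Quotient.eq] at this
      rw [Ideal.mem_span_singleton] at this
      obtain ⟨c, hc⟩ := this
      exact ⟨-c, by linear_combination -hc⟩
    · intro ⟨c, hc⟩
      show Ideal.Quotient.mk (Ideal.span {π}) x.1 = Ideal.Quotient.mk (Ideal.span {π}) x.2
      rw [Ideal.Quotient.eq, Ideal.mem_span_singleton]
      exact ⟨-c, by linear_combination -hc⟩
  have hd : ∀ x : A, ∃ c : O, (x : O × O).2 - (x : O × O).1 = π * c := by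
    intro x
    obtain ⟨c, hc⟩ := (hmem _).mp x.2
    exact ⟨c, hc⟩
  choose d hdspec using hd
  have duniq : ∀ (x : A) (c : O), π * c = (x : O × O).2 - (x : O × O).1 → c = d x := by
    intro x c hc
    exact mul_left_cancel₀ hπ0 (by rw [hc, hdspec x])
  -- the relation X^2 = π X in the quotient
  have hXrel : Ideal.Quotient.mk J (X * X) = Ideal.Quotient.mk J (C π * X) := by
    rw [Ideal.Quotient.eq, hJ, Ideal.mem_span_singleton]
    exact ⟨1, by ring⟩
  set Φ : A →ₐ[O] (PowerSeries O ⧸ J) :=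
    { toFun := fun x => Ideal.Quotient.mk J (C (x : O × O).1 + C (d x) * X)
      map_one' := by
        have h1 : d 1 = 0 := (duniq 1 0 (by simp)).symm
        simp [h1]
      map_mul' := by
        intro x y
        have hmul : d (x * y) = (x : O × O).1 * d y + (y : O × O).1 * d x + π * (d x * d y) := by
          refine (duniq _ _ ?_).symm
          have hx2 : (x : O × O).2 = (x : O × O).1 + π * d x := by
            linear_combination hdspec x
          have hy2 : (y : O × O).2 = (y : O × O).1 + π * d y := by
            linear_combination hdspec y
          have : ((x * y : A) : O × O) = (x : O × O) * (y : O × O) := rfl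
          rw [this]
          simp only [Prod.fst_mul, Prod.snd_mul]
          rw [hx2, hy2]; ring
        have hxy1 : ((x * y : A) : O × O).1 = (x : O × O).1 * (y : O × O).1 := rfl
        rw [hmul, hxy1, ← map_mul, Ideal.Quotient.eq, hJ, Ideal.mem_span_singleton]
        exact ⟨-(C (d x) * C (d y)), by simp only [map_add, map_mul]; ring⟩
      map_zero' := by
        have h0 : d 0 = 0 := (duniq 0 0 (by simp)).symm
        simp [h0]
      map_add' := by
        intro x y
        have hadd : d (x + y) = d x + d y := by
          refine (duniq _ _ ?_).symm
          have : ((x + y : A) : O × O) = (x : O × O) + (y : O × O) := rfl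
          rw [this]
          simp only [Prod.fst_add, Prod.snd_add]
          linear_combination -hdspec x - hdspec y
        have hxy1 : ((x + y : A) : O × O).1 = (x : O × O).1 + (y : O × O).1 := rfl
        rw [hadd, hxy1, ← map_add]
        congr 1
        simp only [map_add]
        ring
      commutes' := by
        intro r
        have hr : ((algebraMap O A r : A) : O × O) = (r, r) := rfl
        have h0 : d (algebraMap O A r) = 0 := by
          refine (duniq _ 0 ?_).symm
          rw [hr]; simp
        rw [hr, h0]
        rw [IsScalarTower.algebraMap_apply O (PowerSeries O) (PowerSeries O ⧸ J),
          Ideal.Quotient.algebraMap_eq]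
        rw [PowerSeries.algebraMap_apply]
        simp
        } with hΦ
  refine ⟨AlgEquiv.ofBijective Φ ⟨?_, ?_⟩⟩
  · rw [injective_iff_map_eq_zero]
    intro x hx
    have hx' : C (x : O × O).1 + C (d x) * X ∈ J := by
      rw [show Φ x = Ideal.Quotient.mk J (C (x : O × O).1 + C (d x) * X) from rfl,
        Ideal.Quotient.eq_zero_iff_mem] at hx
      exact hx
    obtain ⟨ha, hc⟩ := rep_unique O (IsLocalRing.maximalIdeal O) π hπI _ _ (hJ ▸ hx')
    have h2 : (x : O × O).2 = 0 := by
      have := hdspec x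
      rw [ha, hc] at this
      simpa using this
    ext
    · exact ha
    · exact h2
  · intro q
    obtain ⟨f, rfl⟩ := Ideal.Quotient.mk_surjective q
    obtain ⟨a, c, g, hf⟩ := exists_rep O (IsLocalRing.maximalIdeal O) π hπI f
    have hxA : (a, a + π * c) ∈ A := (hmem _).mpr ⟨c, by ring⟩
    refine ⟨⟨(a, a + π * c), hxA⟩, ?_⟩
    have hdx : d ⟨(a, a + π * c), hxA⟩ = c := (duniq _ c (by simp)).symm
    show Ideal.Quotient.mk J (C a + C (d ⟨(a, a + π * c), hxA⟩) * X) = Ideal.Quotient.mk J f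
    rw [hdx, Ideal.Quotient.eq, hJ, Ideal.mem_span_singleton, hf]
    exact ⟨-g, by ring⟩
end

section
/- Let O be a complete DVR with uniformizer ϖ. Consider B = {(a, b, c) ∈ O × O × O : a ≡ b ≡ c mod ϖ}. Then B is isomorphic as an O-algebra to O[[x, y]]/(x(x − ϖ), y(y − ϖ), xy). -/
open MvPowerSeries

noncomputable section
namespace CongrTriple

def ee (n m : ℕ) : Fin 2 →₀ ℕ := Finsupp.single 0 n + Finsupp.single 1 m

@[simp] lemma ee_apply0 (n m : ℕ) : ee n m 0 = n := by
  simp [ee, Finsupp.single_apply]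

@[simp] lemma ee_apply1 (n m : ℕ) : ee n m 1 = m := by
  simp [ee, Finsupp.single_apply]

lemma eq_ee (d : Fin 2 →₀ ℕ) : d = ee (d 0) (d 1) := by
  ext i; fin_cases i <;> simp

lemma ee_le {k l n m : ℕ} : ee k l ≤ ee n m ↔ k ≤ n ∧ l ≤ m := by
  constructor
  · intro hh
    exact ⟨by simpa using hh 0, by simpa using hh 1⟩
  · rintro ⟨h1, h2⟩ i
    fin_cases i <;> simpa

lemma ee_sub {k l n m : ℕ} : ee n m - ee k l = ee (n - k) (m - l) := by
  ext i; fin_cases i <;> simp [Finsupp.tsub_apply]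

lemma ee_eq_iff {k l n m : ℕ} : ee n m = ee k l ↔ n = k ∧ m = l := by
  constructor
  · intro hh
    constructor
    · have := DFunLike.congr_fun hh 0; simpa using this
    · have := DFunLike.congr_fun hh 1; simpa using this
  · rintro ⟨rfl, rfl⟩; rfl

lemma ee_zero : ee 0 0 = 0 := by simp [ee]

lemma ee_add {k l n m : ℕ} : ee n m + ee k l = ee (n + k) (m + l) := by
  ext i; fin_cases i <;> simp

variable {O : Type} [CommRing O]

lemma coeff_ee_apply (f : MvPowerSeries (Fin 2) O) (n m : ℕ) :
    coeff (R := O) (ee n m) f = f (ee n m) := rfl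

lemma coeff_mono_mul (φ : MvPowerSeries (Fin 2) O) (k l n m : ℕ) (cc : O) :
    coeff (R := O) (ee n m) (monomial (R := O) (ee k l) cc * φ) =
      if k ≤ n ∧ l ≤ m then cc * coeff (R := O) (ee (n - k) (m - l)) φ else 0 := by
  rw [coeff_monomial_mul]
  by_cases hc : k ≤ n ∧ l ≤ m
  · rw [if_pos hc, if_pos (ee_le.mpr hc), ee_sub]
  · rw [if_neg hc, if_neg (fun hh => hc (ee_le.mp hh))]

lemma X0_eq : (X 0 : MvPowerSeries (Fin 2) O) = monomial (R := O) (ee 1 0) 1 := by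
  rw [X_def]; congr 1; simp [ee]

lemma X1_eq : (X 1 : MvPowerSeries (Fin 2) O) = monomial (R := O) (ee 0 1) 1 := by
  rw [X_def]; congr 1; simp [ee]

lemma C_eq (c : O) : (C (σ := Fin 2) (R := O) c) = monomial (R := O) (ee 0 0) c := by
  rw [ee_zero, monomial_zero_eq_C_apply]

lemma CX0_eq (t : O) : (C (σ := Fin 2) (R := O) t) * X 0 = monomial (R := O) (ee 1 0) t := by
  rw [C_eq, X0_eq, monomial_mul_monomial, ee_add, mul_one]

lemma CX1_eq (t : O) : (C (σ := Fin 2) (R := O) t) * X 1 = monomial (R := O) (ee 0 1) t := by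
  rw [C_eq, X1_eq, monomial_mul_monomial, ee_add, mul_one]

lemma g1_eq (ϖ : O) : (X 0 : MvPowerSeries (Fin 2) O) * (X 0 - C (σ := Fin 2) (R := O) ϖ) =
    monomial (R := O) (ee 2 0) 1 - monomial (R := O) (ee 1 0) ϖ := by
  rw [mul_sub, X0_eq, C_eq, monomial_mul_monomial, monomial_mul_monomial, ee_add, ee_add,
    mul_one, one_mul]

lemma g2_eq (ϖ : O) : (X 1 : MvPowerSeries (Fin 2) O) * (X 1 - C (σ := Fin 2) (R := O) ϖ) =
    monomial (R := O) (ee 0 2) 1 - monomial (R := O) (ee 0 1) ϖ := by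
  rw [mul_sub, X1_eq, C_eq, monomial_mul_monomial, monomial_mul_monomial, ee_add, ee_add,
    mul_one, one_mul]

lemma g3_eq : (X 0 : MvPowerSeries (Fin 2) O) * X 1 = monomial (R := O) (ee 1 1) 1 := by
  rw [X0_eq, X1_eq, monomial_mul_monomial, ee_add, mul_one]

lemma coeff_monomial_ee (k l n m : ℕ) (cc : O) :
    coeff (R := O) (ee n m) (monomial (R := O) (ee k l) cc) = if n = k ∧ m = l then cc else 0 := by
  rw [MvPowerSeries.coeff_monomial]
  by_cases hc : n = k ∧ m = l
  · rw [if_pos hc, if_pos (ee_eq_iff.mpr hc)]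
  · rw [if_neg hc, if_neg (fun hh => hc (ee_eq_iff.mp hh))]


lemma exists_gseq (O : Type) [CommRing O] [IsDomain O] [IsDiscreteValuationRing O]
    [IsAdicComplete (IsLocalRing.maximalIdeal O) O] (ϖ : O) (hϖ : Irreducible ϖ)
    (a : ℕ → O) :
    ∃ t : O, ∃ g : ℕ → O, t - ϖ * g 0 = a 1 ∧ ∀ k, g k - ϖ * g (k + 1) = a (k + 2) := by
  set s : ℕ → O := fun N => ∑ i ∈ Finset.range N, a (i + 1) * ϖ ^ i with hs
  have hcau : ∀ {m n : ℕ}, m ≤ n →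
      s m ≡ s n [SMOD ((IsLocalRing.maximalIdeal O) ^ m • ⊤ : Ideal O)] := by
    intro m n hmn
    rw [SModEq.sub_mem]
    simp only [← Ideal.one_eq_top, smul_eq_mul, mul_one, hϖ.maximalIdeal_eq,
      Ideal.span_singleton_pow, Ideal.mem_span_singleton]
    have : s n - s m = ∑ i ∈ Finset.Ico m n, a (i + 1) * ϖ ^ i := by
      rw [hs]
      rw [← Finset.sum_Ico_eq_sub _ hmn]
    rw [← dvd_neg, neg_sub, this]
    exact Finset.dvd_sum fun i hi => Dvd.dvd.mul_left
      (pow_dvd_pow ϖ (Finset.mem_Ico.mp hi).1) _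
  obtain ⟨t, ht⟩ := IsPrecomplete.prec (IsAdicComplete.toIsPrecomplete) hcau
  have hdvd : ∀ n : ℕ, ϖ ^ n ∣ t - s n := by
    intro n
    have := SModEq.sub_mem.mp (ht n).symm
    simpa only [← Ideal.one_eq_top, smul_eq_mul, mul_one, hϖ.maximalIdeal_eq,
      Ideal.span_singleton_pow, Ideal.mem_span_singleton] using this
  choose g hg using fun k => hdvd (k + 1)
  refine ⟨t, g, ?_, ?_⟩
  · have h0 := hg 0
    simp only [zero_add, pow_one, hs, Finset.sum_range_one, pow_zero, mul_one] at h0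
    linear_combination h0
  · intro k
    have h1 := hg k
    have h2 := hg (k + 1)
    have key : ϖ ^ (k + 1) * (g k - ϖ * g (k + 1)) = ϖ ^ (k + 1) * a (k + 2) := by
      have hstep : s (k + 2) - s (k + 1) = a (k + 2) * ϖ ^ (k + 1) := by
        simp [hs, Finset.sum_range_succ]
      have : ϖ ^ (k + 1) * g k - ϖ ^ (k + 2) * g (k + 1) = s (k + 2) - s (k + 1) := by
        rw [← h1, ← h2]; ring
      rw [hstep] at this
      linear_combination this
    exact mul_left_cancel₀ (pow_ne_zero _ hϖ.ne_zero) key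

lemma decomp (O : Type) [CommRing O] [IsDomain O] [IsDiscreteValuationRing O]
    [IsAdicComplete (IsLocalRing.maximalIdeal O) O] (ϖ : O) (hϖ : Irreducible ϖ)
    (F : MvPowerSeries (Fin 2) O) :
    ∃ (c t u : O) (G H K : MvPowerSeries (Fin 2) O),
      F = C (σ := Fin 2) (R := O) c + C (σ := Fin 2) (R := O) t * X 0 + C (σ := Fin 2) (R := O) u * X 1
        + (X 0 * (X 0 - C (σ := Fin 2) (R := O) ϖ)) * G + (X 1 * (X 1 - C (σ := Fin 2) (R := O) ϖ)) * H
        + (X 0 * X 1) * K := by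
  obtain ⟨t, g, hg1, hg2⟩ := exists_gseq O ϖ hϖ (fun n => coeff (R := O) (ee n 0) F)
  obtain ⟨u, h, hh1, hh2⟩ := exists_gseq O ϖ hϖ (fun m => coeff (R := O) (ee 0 m) F)
  simp only [coeff_ee_apply] at hg1 hg2 hh1 hh2
  refine ⟨F (ee 0 0), t, u,
    (show MvPowerSeries (Fin 2) O from fun d => if d 1 = 0 then g (d 0) else 0),
    (show MvPowerSeries (Fin 2) O from fun d => if d 0 = 0 then h (d 1) else 0),
    (show MvPowerSeries (Fin 2) O from fun d => F (ee (d 0 + 1) (d 1 + 1))), ?_⟩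
  apply MvPowerSeries.ext
  intro d
  obtain ⟨n, m, rfl⟩ : ∃ n m, d = ee n m := ⟨d 0, d 1, eq_ee d⟩
  rw [map_add, map_add, map_add, map_add, map_add]
  rw [g1_eq, g2_eq, g3_eq, sub_mul, sub_mul, map_sub, map_sub]
  rw [C_eq, CX0_eq, CX1_eq, coeff_monomial_ee, coeff_monomial_ee, coeff_monomial_ee]
  rw [coeff_mono_mul, coeff_mono_mul, coeff_mono_mul, coeff_mono_mul, coeff_mono_mul]
  simp -zeta only [coeff_ee_apply, ee_apply0, ee_apply1, one_mul]
  rcases n with _ | n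
  · rcases m with _ | m
    · norm_num
    · rcases m with _ | m
      · norm_num
        linear_combination -hh1
      · norm_num
        rw [show m + 1 + 1 - 2 = m from by omega]
        linear_combination -hh2 m
  · rcases m with _ | m
    · rcases n with _ | n
      · norm_num
        linear_combination -hg1
      · norm_num
        rw [show n + 1 + 1 - 2 = n from by omega]
        linear_combination -hg2 n
    · norm_num


lemma coeff_mul_mono (φ : MvPowerSeries (Fin 2) O) (k l n m : ℕ) (cc : O) :
    coeff (R := O) (ee n m) (φ * monomial (R := O) (ee k l) cc) =
      if k ≤ n ∧ l ≤ m then coeff (R := O) (ee (n - k) (m - l)) φ * cc else 0 := by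
  rw [coeff_mul_monomial]
  by_cases hc : k ≤ n ∧ l ≤ m
  · rw [if_pos hc, if_pos (ee_le.mpr hc), ee_sub]
  · rw [if_neg hc, if_neg (fun hh => hc (ee_le.mp hh))]


lemma lin_mem (O : Type) [CommRing O] [IsDomain O] [IsDiscreteValuationRing O]
    [IsAdicComplete (IsLocalRing.maximalIdeal O) O] (ϖ : O) (hϖ : Irreducible ϖ)
    {c t u : O}
    (hmem : C (σ := Fin 2) (R := O) c + C (σ := Fin 2) (R := O) t * X 0 + C (σ := Fin 2) (R := O) u * X 1 ∈
      Ideal.span {X 0 * (X 0 - C (σ := Fin 2) (R := O) ϖ), X 1 * (X 1 - C (σ := Fin 2) (R := O) ϖ),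
        X 0 * X 1}) :
    c = 0 ∧ t = 0 ∧ u = 0 := by
  rw [Ideal.mem_span_insert] at hmem
  obtain ⟨A, z1, hz1, hP⟩ := hmem
  rw [Ideal.mem_span_insert] at hz1
  obtain ⟨B, z2, hz2, hz1'⟩ := hz1
  rw [Ideal.mem_span_singleton'] at hz2
  obtain ⟨K, hK⟩ := hz2
  subst hz1'
  rw [← hK] at hP
  have key : ∀ n m : ℕ,
      (if n = 0 ∧ m = 0 then c else 0) + (if n = 1 ∧ m = 0 then t else 0)
        + (if n = 0 ∧ m = 1 then u else 0) =
      ((if 2 ≤ n ∧ 0 ≤ m then coeff (R := O) (ee (n - 2) (m - 0)) A * 1 else 0)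
        - (if 1 ≤ n ∧ 0 ≤ m then coeff (R := O) (ee (n - 1) (m - 0)) A * ϖ else 0))
      + (((if 0 ≤ n ∧ 2 ≤ m then coeff (R := O) (ee (n - 0) (m - 2)) B * 1 else 0)
        - (if 0 ≤ n ∧ 1 ≤ m then coeff (R := O) (ee (n - 0) (m - 1)) B * ϖ else 0))
      + (if 1 ≤ n ∧ 1 ≤ m then coeff (R := O) (ee (n - 1) (m - 1)) K * 1 else 0)) := by
    intro n m
    have hc := congrArg (coeff (R := O) (ee n m)) hP
    rw [map_add, map_add, map_add, map_add] at hc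
    rw [g1_eq, g2_eq, g3_eq, mul_sub, mul_sub, map_sub, map_sub] at hc
    rw [C_eq, CX0_eq, CX1_eq, coeff_monomial_ee, coeff_monomial_ee, coeff_monomial_ee] at hc
    rw [coeff_mul_mono, coeff_mul_mono, coeff_mul_mono, coeff_mul_mono, coeff_mul_mono] at hc
    exact hc
  have hc0 : c = 0 := by have := key 0 0; norm_num at this; exact this
  have stepA : ∀ n : ℕ, coeff (R := O) (ee n 0) A = ϖ * coeff (R := O) (ee (n + 1) 0) A := by
    intro n
    have := key (n + 2) 0
    rw [show n + 2 - 2 = n from by omega, show n + 2 - 1 = n + 1 from by omega] at this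
    norm_num at this
    rw [if_neg (by omega : ¬ n + 2 = 1)] at this
    linear_combination -this
  have stepB : ∀ m : ℕ, coeff (R := O) (ee 0 m) B = ϖ * coeff (R := O) (ee 0 (m + 1)) B := by
    intro m
    have := key 0 (m + 2)
    rw [show m + 2 - 2 = m from by omega, show m + 2 - 1 = m + 1 from by omega] at this
    norm_num at this
    rw [if_neg (by omega : ¬ m + 2 = 1)] at this
    linear_combination -this
  have powA : ∀ n : ℕ, coeff (R := O) (ee 0 0) A = ϖ ^ n * coeff (R := O) (ee n 0) A := by
    intro n
    induction n with
    | zero => simp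
    | succ k ih => rw [ih, stepA k, pow_succ]; ring
  have powB : ∀ m : ℕ, coeff (R := O) (ee 0 0) B = ϖ ^ m * coeff (R := O) (ee 0 m) B := by
    intro m
    induction m with
    | zero => simp
    | succ k ih => rw [ih, stepB k, pow_succ]; ring
  have hausA : coeff (R := O) (ee 0 0) A = 0 := by
    refine IsHausdorff.haus (IsAdicComplete.toIsHausdorff
      (I := IsLocalRing.maximalIdeal O) (M := O)) _ (fun n => ?_)
    rw [SModEq.zero]
    simp only [← Ideal.one_eq_top, smul_eq_mul, mul_one, hϖ.maximalIdeal_eq,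
      Ideal.span_singleton_pow, Ideal.mem_span_singleton]
    exact ⟨coeff (R := O) (ee n 0) A, powA n⟩
  have hausB : coeff (R := O) (ee 0 0) B = 0 := by
    refine IsHausdorff.haus (IsAdicComplete.toIsHausdorff
      (I := IsLocalRing.maximalIdeal O) (M := O)) _ (fun m => ?_)
    rw [SModEq.zero]
    simp only [← Ideal.one_eq_top, smul_eq_mul, mul_one, hϖ.maximalIdeal_eq,
      Ideal.span_singleton_pow, Ideal.mem_span_singleton]
    exact ⟨coeff (R := O) (ee 0 m) B, powB m⟩
  have ht : t = 0 := by
    have := key 1 0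
    norm_num at this
    rw [this, hausA]
    ring
  have hu : u = 0 := by
    have := key 0 1
    norm_num at this
    rw [this, hausB]
    ring
  exact ⟨hc0, ht, hu⟩

end CongrTriple

end

/-!
STATEMENT 7: For a complete DVR `O` with uniformizer `ϖ`, the `O`-algebra
`B = {(a, b, c) ∈ O × O × O : a ≡ b ≡ c mod ϖ}` is isomorphic to
`O⟦x, y⟧/(x(x − ϖ), y(y − ϖ), xy)`.
-/

open CongrTriple MvPowerSeries in
theorem congruence_triple_algebra_iso
    (O : Type) [CommRing O] [IsDomain O] [IsDiscreteValuationRing O]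
    [IsAdicComplete (IsLocalRing.maximalIdeal O) O]
    (ϖ : O) (hϖ : Irreducible ϖ)
    -- the three coordinate maps `O × O × O → O/(ϖ)`
    (f₁ f₂ f₃ : (O × O × O) →ₐ[O] (O ⧸ Ideal.span {ϖ}))
    (hf₁ : f₁ = (Ideal.Quotient.mkₐ O (Ideal.span {ϖ})).comp (AlgHom.fst O O (O × O)))
    (hf₂ : f₂ = (Ideal.Quotient.mkₐ O (Ideal.span {ϖ})).comp
      ((AlgHom.fst O O O).comp (AlgHom.snd O O (O × O))))
    (hf₃ : f₃ = (Ideal.Quotient.mkₐ O (Ideal.span {ϖ})).comp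
      ((AlgHom.snd O O O).comp (AlgHom.snd O O (O × O))))
    -- `B` is the subalgebra of triples that are pairwise congruent mod `ϖ`
    (B : Subalgebra O (O × O × O))
    (hB : B = AlgHom.equalizer f₁ f₂ ⊓ AlgHom.equalizer f₁ f₃) :
    Nonempty (B ≃ₐ[O]
      (MvPowerSeries (Fin 2) O ⧸ Ideal.span
        {MvPowerSeries.X 0 * (MvPowerSeries.X 0 - MvPowerSeries.C (σ := Fin 2) (R := O) ϖ),
         MvPowerSeries.X 1 * (MvPowerSeries.X 1 - MvPowerSeries.C (σ := Fin 2) (R := O) ϖ),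
         MvPowerSeries.X 0 * MvPowerSeries.X 1})) := by
  classical
  set I : Ideal (MvPowerSeries (Fin 2) O) := Ideal.span
    {X 0 * (X 0 - C (σ := Fin 2) (R := O) ϖ), X 1 * (X 1 - C (σ := Fin 2) (R := O) ϖ), X 0 * X 1} with hI
  -- membership criterion for B
  have hBmem : ∀ p : O × O × O, p ∈ B ↔ ϖ ∣ p.1 - p.2.1 ∧ ϖ ∣ p.1 - p.2.2 := by
    intro p
    rw [hB]
    rw [Algebra.mem_inf, AlgHom.mem_equalizer, AlgHom.mem_equalizer, hf₁, hf₂, hf₃]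
    simp only [AlgHom.comp_apply, Ideal.Quotient.mkₐ_eq_mk]
    rw [Ideal.Quotient.eq, Ideal.Quotient.eq, Ideal.mem_span_singleton,
      Ideal.mem_span_singleton]
    exact Iff.rfl
  -- division by ϖ
  let dv : O → O := fun x => if h : ϖ ∣ x then h.choose else 0
  have hdv : ∀ {x : O}, ϖ ∣ x → ϖ * dv x = x := by
    intro x h
    simp only [dv, dif_pos h]
    exact h.choose_spec.symm
  have hdvu : ∀ {x s : O}, ϖ * s = x → dv x = s := by
    intro x s hs
    have hd : ϖ ∣ x := ⟨s, hs.symm⟩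
    exact mul_left_cancel₀ hϖ.ne_zero ((hdv hd).trans hs.symm)
  -- linear representatives
  let lin : O → O → O → MvPowerSeries (Fin 2) O := fun c t u =>
    C (σ := Fin 2) (R := O) c + C (σ := Fin 2) (R := O) t * X 0 + C (σ := Fin 2) (R := O) u * X 1
  let ψf : B → (MvPowerSeries (Fin 2) O ⧸ I) := fun p =>
    Ideal.Quotient.mk I (lin p.val.2.2 (dv (p.val.1 - p.val.2.2)) (dv (p.val.2.1 - p.val.2.2)))
  have hd1 : ∀ p : B, ϖ ∣ p.val.1 - p.val.2.2 := fun p => ((hBmem p.val).mp p.2).2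
  have hd2 : ∀ p : B, ϖ ∣ p.val.2.1 - p.val.2.2 := fun p => by
    have h12 := ((hBmem p.val).mp p.2).1
    have h13 := ((hBmem p.val).mp p.2).2
    have : p.val.2.1 - p.val.2.2 = (p.val.1 - p.val.2.2) - (p.val.1 - p.val.2.1) := by ring
    rw [this]
    exact dvd_sub h13 h12
  have hψf : ∀ (p : B) (s w : O), ϖ * s = p.val.1 - p.val.2.2 →
      ϖ * w = p.val.2.1 - p.val.2.2 →
      ψf p = Ideal.Quotient.mk I (lin p.val.2.2 s w) := by
    intro p s w hs hw
    simp only [ψf]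
    rw [hdvu hs, hdvu hw]
  have hspan : ∀ a1 a2 a3 : MvPowerSeries (Fin 2) O,
      a1 * (X 0 * (X 0 - C (σ := Fin 2) (R := O) ϖ)) + a2 * (X 1 * (X 1 - C (σ := Fin 2) (R := O) ϖ))
        + a3 * (X 0 * X 1) ∈ I := by
    intro a1 a2 a3
    refine add_mem (add_mem ?_ ?_) ?_ <;>
      exact Ideal.mul_mem_left _ _ (Ideal.subset_span (by simp))
  let ψ : B →ₐ[O] (MvPowerSeries (Fin 2) O ⧸ I) :=
  { toFun := ψf
    map_one' := by
      rw [hψf 1 0 0 (by simp) (by simp)]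
      simp [lin]
    map_mul' := by
      intro p q
      show ψf (p * q) = ψf p * ψf q
      have hp1 := hdv (hd1 p)
      have hp2 := hdv (hd2 p)
      have hq1 := hdv (hd1 q)
      have hq2 := hdv (hd2 q)
      set a := p.val.1; set b := p.val.2.1; set c := p.val.2.2
      set a' := q.val.1; set b' := q.val.2.1; set c' := q.val.2.2
      set s := dv (a - c); set w := dv (b - c)
      set s' := dv (a' - c'); set w' := dv (b' - c')
      have hmul1 : (p * q).val.1 = a * a' := by
        show (p.val * q.val).1 = _
        rfl
      have hmul2 : (p * q).val.2.1 = b * b' := by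
        show (p.val * q.val).2.1 = _
        rfl
      have hmul3 : (p * q).val.2.2 = c * c' := by
        show (p.val * q.val).2.2 = _
        rfl
      have hs'' : ϖ * (c * s' + c' * s + ϖ * s * s') = (p * q).val.1 - (p * q).val.2.2 := by
        rw [hmul1, hmul3]
        linear_combination c * hq1 + c' * hp1 + (ϖ * s') * hp1 + (a - c) * hq1
      have hw'' : ϖ * (c * w' + c' * w + ϖ * w * w') = (p * q).val.2.1 - (p * q).val.2.2 := by
        rw [hmul2, hmul3]
        linear_combination c * hq2 + c' * hp2 + (ϖ * w') * hp2 + (b - c) * hq2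
      rw [hψf (p * q) _ _ hs'' hw'', hmul3]
      simp only [ψf]
      rw [← map_mul, Ideal.Quotient.eq]
      have key : lin (c * c') (c * s' + c' * s + ϖ * s * s') (c * w' + c' * w + ϖ * w * w')
          - lin c s w * lin c' s' w' =
          (-(C (σ := Fin 2) (R := O) s * C (σ := Fin 2) (R := O) s')) * (X 0 * (X 0 - C (σ := Fin 2) (R := O) ϖ))
          + (-(C (σ := Fin 2) (R := O) w * C (σ := Fin 2) (R := O) w')) * (X 1 * (X 1 - C (σ := Fin 2) (R := O) ϖ))
          + (-(C (σ := Fin 2) (R := O) s * C (σ := Fin 2) (R := O) w' + C (σ := Fin 2) (R := O) w * C (σ := Fin 2) (R := O) s'))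
            * (X 0 * X 1) := by
        simp only [lin, map_add, map_mul]
        ring
      rw [key]
      exact hspan _ _ _
    map_zero' := by
      show ψf 0 = 0
      rw [hψf 0 0 0 (by simp) (by simp)]
      simp [lin]
    map_add' := by
      intro p q
      show ψf (p + q) = ψf p + ψf q
      have hp1 := hdv (hd1 p)
      have hp2 := hdv (hd2 p)
      have hq1 := hdv (hd1 q)
      have hq2 := hdv (hd2 q)
      have hadd1 : (p + q).val.1 = p.val.1 + q.val.1 := by
        show (p.val + q.val).1 = _
        simp
      have hadd2 : (p + q).val.2.1 = p.val.2.1 + q.val.2.1 := by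
        show (p.val + q.val).2.1 = _
        simp
      have hadd3 : (p + q).val.2.2 = p.val.2.2 + q.val.2.2 := by
        show (p.val + q.val).2.2 = _
        simp
      have hs : ϖ * (dv (p.val.1 - p.val.2.2) + dv (q.val.1 - q.val.2.2)) =
          (p + q).val.1 - (p + q).val.2.2 := by
        rw [hadd1, hadd3]
        linear_combination hp1 + hq1
      have hw : ϖ * (dv (p.val.2.1 - p.val.2.2) + dv (q.val.2.1 - q.val.2.2)) =
          (p + q).val.2.1 - (p + q).val.2.2 := by
        rw [hadd2, hadd3]
        linear_combination hp2 + hq2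
      rw [hψf (p + q) _ _ hs hw, hadd3]
      simp only [ψf]
      rw [← map_add]
      congr 1
      simp only [lin, map_add]
      ring
    commutes' := by
      intro r
      have hval : (algebraMap O B r).val = (r, r, r) := rfl
      have hs : ϖ * 0 = (algebraMap O B r).val.1 - (algebraMap O B r).val.2.2 := by
        rw [hval]; simp
      have hw : ϖ * 0 = (algebraMap O B r).val.2.1 - (algebraMap O B r).val.2.2 := by
        rw [hval]; simp
      show ψf (algebraMap O B r) = _
      rw [hψf _ 0 0 hs hw, hval]
      simp only [lin, map_zero, zero_mul, add_zero]
      rfl }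
  have hinj : Function.Injective ψ := by
    rw [injective_iff_map_eq_zero]
    intro p hp
    have hp' : ψf p = 0 := hp
    simp only [ψf] at hp'
    rw [Ideal.Quotient.eq_zero_iff_mem] at hp'
    obtain ⟨hc0, ht0, hu0⟩ := lin_mem O ϖ hϖ hp'
    have h1 := hdv (hd1 p)
    have h2 := hdv (hd2 p)
    rw [ht0, mul_zero, hc0, sub_zero] at h1
    rw [hu0, mul_zero, hc0, sub_zero] at h2
    have : p.val = 0 := by
      ext
      · exact h1.symm
      · exact h2.symm
      · exact hc0
    exact Subtype.ext this
  have hsurj : Function.Surjective ψ := by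
    intro q
    obtain ⟨F, rfl⟩ := Ideal.Quotient.mk_surjective q
    obtain ⟨c, t, u, G, H, K, hF⟩ := decomp O ϖ hϖ F
    have hpB : (c + ϖ * t, c + ϖ * u, c) ∈ B := by
      rw [hBmem]
      exact ⟨⟨t - u, by ring⟩, ⟨t, by ring⟩⟩
    refine ⟨⟨(c + ϖ * t, c + ϖ * u, c), hpB⟩, ?_⟩
    have hs : ϖ * t = (c + ϖ * t) - c := by ring
    have hw : ϖ * u = (c + ϖ * u) - c := by ring
    show ψf _ = _
    rw [hψf ⟨(c + ϖ * t, c + ϖ * u, c), hpB⟩ t u hs hw]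
    rw [Ideal.Quotient.eq]
    have : lin c t u - F = (-G) * (X 0 * (X 0 - C (σ := Fin 2) (R := O) ϖ))
        + (-H) * (X 1 * (X 1 - C (σ := Fin 2) (R := O) ϖ)) + (-K) * (X 0 * X 1) := by
      rw [hF]; simp only [lin]; ring
    rw [this]
    exact hspan _ _ _
  exact ⟨AlgEquiv.ofBijective ψ ⟨hinj, hsurj⟩⟩
end

section
/- Let O be a complete DVR with fraction field K and let R be a commutative O-algebra acting on a finitely generated torsion-free O-module L, equipped with an R-equivariant perfect O-bilinear pairing R × L → O (i.e., identifying L ≅ Hom_O(R, O) as R-modules). If L/m_R L ≅ k for the maximal ideal m_R of the local ring R with residue field k, then L is free of rank 1 over R. -/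
/-!
STATEMENT 19: Let `O` be a complete DVR and `R` a complete noetherian local `O`-algebra,
finite and torsion-free over `O`, acting on a finitely generated torsion-free `O`-module
`L` with an `R`-equivariant perfect `O`-bilinear pairing `R × L → O`.  If `L/m_R L ≅ k`
(the residue field of `R`), then `L` is free of rank `1` over `R`.
-/

theorem free_rank_one_of_perfect_pairing
    (O : Type) [CommRing O] [IsDomain O] [IsDiscreteValuationRing O]
    [IsAdicComplete (IsLocalRing.maximalIdeal O) O]
    (R : Type) [CommRing R] [IsNoetherianRing R] [IsLocalRing R] [Algebra O R]
    [IsAdicComplete (IsLocalRing.maximalIdeal R) R]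
    [Module.Finite O R] (hRtf : Submodule.torsion O R = ⊥)
    (L : Type) [AddCommGroup L] [Module O L] [Module.Finite O L]
    (hLtf : Submodule.torsion O L = ⊥)
    [Module R L] [IsScalarTower O R L]
    -- the pairing `R × L → O`
    (B : R →ₗ[O] L →ₗ[O] O)
    -- `R`-equivariance: `⟨rs, l⟩ = ⟨s, r • l⟩`
    (hequiv : ∀ (r s : R) (l : L), B (r * s) l = B s (r • l))
    -- perfectness: the induced maps `L → Hom_O(R, O)` and `R → Hom_O(L, O)` are bijective
    (hperf₁ : Function.Bijective (B.flip : L →ₗ[O] (R →ₗ[O] O)))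
    (hperf₂ : Function.Bijective (B : R →ₗ[O] (L →ₗ[O] O)))
    -- `L / m_R L ≅ k`
    (hcyc : Nonempty ((L ⧸ (IsLocalRing.maximalIdeal R • (⊤ : Submodule R L))) ≃ₗ[R]
      IsLocalRing.ResidueField R)) :
    Nonempty (L ≃ₗ[R] R) := by
  obtain ⟨e⟩ := hcyc
  have hfin : Module.Finite R L := Module.Finite.of_restrictScalars_finite O R L
  -- pick x mapping to 1 in the residue field
  obtain ⟨x, hx⟩ := Submodule.Quotient.mk_surjective _ (e.symm 1)
  have hex : e (Submodule.Quotient.mk x) = 1 := by rw [hx]; simp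
  -- L is generated by x
  have hspan : Submodule.span R {x} = ⊤ := by
    have hle : (⊤ : Submodule R L) ≤ Submodule.span R {x} ⊔
        IsLocalRing.maximalIdeal R • (⊤ : Submodule R L) := by
      intro l _
      obtain ⟨r, hr⟩ := IsLocalRing.residue_surjective (R := R) (e (Submodule.Quotient.mk l))
      have : Submodule.Quotient.mk (p := IsLocalRing.maximalIdeal R • (⊤ : Submodule R L))
          (l - r • x) = 0 := by
        apply e.injective
        rw [map_zero]
        have : Submodule.Quotient.mk (p := IsLocalRing.maximalIdeal R • (⊤ : Submodule R L))
            (l - r • x) = Submodule.Quotient.mk l - r • Submodule.Quotient.mk x := rfl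
        rw [this, map_sub, map_smul, hex]
        have : r • (1 : IsLocalRing.ResidueField R) = IsLocalRing.residue R r := by
          rw [← Algebra.algebraMap_eq_smul_one]; rfl
        rw [this, hr, sub_self]
      have hmem : l - r • x ∈ IsLocalRing.maximalIdeal R • (⊤ : Submodule R L) :=
        (Submodule.Quotient.mk_eq_zero _).1 this
      have : l = r • x + (l - r • x) := by abel
      rw [this]
      exact Submodule.add_mem_sup (Submodule.smul_mem _ r (Submodule.mem_span_singleton_self x))
        hmem
    have := Submodule.le_of_le_smul_of_le_jacobson_bot (Module.Finite.fg_top (R := R) (M := L))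
      (by rw [IsLocalRing.jacobson_eq_maximalIdeal ⊥ bot_ne_top]) hle
    exact top_le_iff.1 this
  -- the map r ↦ r • x
  set f : R →ₗ[R] L := LinearMap.toSpanSingleton R L x with hf
  have hsurj : Function.Surjective f := by
    intro l
    have : l ∈ Submodule.span R {x} := hspan ▸ Submodule.mem_top
    obtain ⟨r, hr⟩ := Submodule.mem_span_singleton.1 this
    exact ⟨r, hr⟩
  have hinj : Function.Injective f := by
    rw [injective_iff_map_eq_zero]
    intro r hrx
    have hann : ∀ l : L, r • l = 0 := by
      intro l
      obtain ⟨s, hs⟩ := hsurj l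
      rw [← hs]
      show r • (s • x) = 0
      rw [smul_comm, show r • x = 0 from hrx, smul_zero]
    have : B r = 0 := by
      ext l
      have := hequiv 1 r l
      rw [one_mul, one_smul] at this
      have h2 := hequiv r 1 l
      rw [mul_one] at h2
      rw [h2, hann l, map_zero]
      simp
    exact hperf₂.1 (by simp [this])
  exact ⟨(LinearEquiv.ofBijective f ⟨hinj, hsurj⟩).symm⟩
end
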